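/- Let θ ∈ ℝⁿ with ‖θ‖ ≥ θ_min > 0, let a* = a*(θ) be the unique maximizer of ⟨θ, ·⟩ over 𝒜 with ∇g(a*) = ω θ, ω > 0, and assume: λ^Δ_min·I ⪯ ∇²g(y) for all y in the ball B(a*, m'); ‖∇g(a*)‖ ≤ ∇_max; ‖a‖ ≤ a_max for all a ∈ 𝒜; and there are m'' ∈ (0, m') and c_min > 0 such that r_θ(a) := ⟨θ, a* − a⟩ ≥ c_min whenever a ∈ 𝒜 and ‖a − a*‖ > m''. Set c₃ = min{ θ_min λ^Δ_min/(2∇_max), c_min/(4 a_max²) }. Then for every a ∈ 𝒜: r_θ(a) ≥ c₃ · ‖a*(θ) − a‖². -/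

import Mathlib

open RealInnerProductSpace

/-- global quadratic lower bound on instantaneous regret.
Under the stated curvature, gradient, boundedness and regret-gap hypotheses, the instantaneous
regret satisfies `r_θ(a) ≥ c₃ ‖a*(θ) − a‖²` for every action `a ∈ 𝒜 = {g ≤ 0}`, where
`c₃ = min{θmin λΔmin/(2∇max), c_min/(4 a_max²)}`. -/
theorem regret_quadratic_global_lower_bound {n : ℕ}
    (g : EuclideanSpace ℝ (Fin n) → ℝ) (hg : ContDiff ℝ 3 g)
    (κ : ℝ) (hκ : 0 < κ) (hsc : StrongConvexOn Set.univ κ g)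
    (hcompact : IsCompact {x : EuclideanSpace ℝ (Fin n) | g x ≤ 0})
    (θ : EuclideanSpace ℝ (Fin n)) (θmin : ℝ) (hθmin : 0 < θmin) (hθlb : θmin ≤ ‖θ‖)
    (astar : EuclideanSpace ℝ (Fin n))
    (hmem : g astar ≤ 0) (hmax : ∀ b, g b ≤ 0 → ⟪θ, b⟫ ≤ ⟪θ, astar⟫)
    (huniq : ∀ a', (g a' ≤ 0 ∧ ∀ b, g b ≤ 0 → ⟪θ, b⟫ ≤ ⟪θ, a'⟫) → a' = astar)
    (hbdry : g astar = 0)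
    (ω : ℝ) (hω : 0 < ω) (hgrad : gradient g astar = ω • θ)
    (m' gradmax lamΔmin amax : ℝ) (hm' : 0 < m') (hgradmax : 0 < gradmax)
    (hlamΔmin : 0 < lamΔmin) (hamax : 0 < amax)
    (hHess : ∀ y : EuclideanSpace ℝ (Fin n), ‖y - astar‖ ≤ m' →
      ∀ v : EuclideanSpace ℝ (Fin n),
        lamΔmin * ‖v‖ ^ 2 ≤ ⟪fderiv ℝ (gradient g) y v, v⟫)
    (hgradbnd : ‖gradient g astar‖ ≤ gradmax)
    (hanorm : ∀ a : EuclideanSpace ℝ (Fin n), g a ≤ 0 → ‖a‖ ≤ amax)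
    (m'' cmin : ℝ) (hm''0 : 0 < m'') (hm'' : m'' < m') (hcmin : 0 < cmin)
    (hgap : ∀ a : EuclideanSpace ℝ (Fin n), g a ≤ 0 → m'' < ‖a - astar‖ →
      cmin ≤ ⟪θ, astar⟫ - ⟪θ, a⟫)
    (c₃ : ℝ) (hc₃ : c₃ = min (θmin * lamΔmin / (2 * gradmax)) (cmin / (4 * amax ^ 2))) :
    ∀ a : EuclideanSpace ℝ (Fin n), g a ≤ 0 →
      c₃ * ‖astar - a‖ ^ 2 ≤ ⟪θ, astar⟫ - ⟪θ, a⟫ := by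
  intro a ha
  have hnormrev : ‖astar - a‖ = ‖a - astar‖ := norm_sub_rev _ _
  by_cases hfar : m'' < ‖a - astar‖
  · -- far case
    have hgapa := hgap a ha hfar
    have h2a : ‖astar - a‖ ≤ 2 * amax := by
      calc ‖astar - a‖ ≤ ‖astar‖ + ‖a‖ := norm_sub_le _ _
        _ ≤ amax + amax := add_le_add (hanorm _ hmem) (hanorm _ ha)
        _ = 2 * amax := by ring
    have hc3le : c₃ ≤ cmin / (4 * amax ^ 2) := hc₃ ▸ min_le_right _ _
    have hc3pos : 0 ≤ c₃ := by
      rw [hc₃]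
      apply le_min <;> positivity
    have hn0 : (0:ℝ) ≤ ‖astar - a‖ := norm_nonneg _
    have hsq : ‖astar - a‖ ^ 2 ≤ (2 * amax) ^ 2 := by nlinarith
    have hmain : c₃ * ‖astar - a‖ ^ 2 ≤ cmin := by
      calc c₃ * ‖astar - a‖ ^ 2 ≤ cmin / (4 * amax ^ 2) * (2 * amax) ^ 2 := by
            apply mul_le_mul hc3le hsq (sq_nonneg _) (by positivity)
        _ = cmin := by
            rw [show ((2:ℝ) * amax) ^ 2 = 4 * amax ^ 2 by ring,
              div_mul_cancel₀ _ (by positivity : (4:ℝ) * amax ^ 2 ≠ 0)]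
    linarith
  · -- near case
    push_neg at hfar
    set v : EuclideanSpace ℝ (Fin n) := a - astar with hv
    have hvm : ‖v‖ ≤ m'' := hfar
    -- diff facts
    have hg1 : Differentiable ℝ g := hg.differentiable (by norm_num)
    have hgradC : ContDiff ℝ 2 (gradient g) := by
      have h1 : ContDiff ℝ 2 (fderiv ℝ g) := hg.fderiv_right (by norm_num)
      have hlin : IsBoundedLinearMap ℝ
          (fun f : StrongDual ℝ (EuclideanSpace ℝ (Fin n)) =>
            (InnerProductSpace.toDual ℝ (EuclideanSpace ℝ (Fin n))).symm f) := by
        refine ⟨⟨fun x y => map_add _ _ _, fun c x => ?_⟩, 1, one_pos, fun x => ?_⟩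
        · simpa using LinearIsometryEquiv.map_smulₛₗ
            (InnerProductSpace.toDual ℝ (EuclideanSpace ℝ (Fin n))).symm c x
        · simp [LinearIsometryEquiv.norm_map]
      exact hlin.contDiff.comp h1
    have hgradD : Differentiable ℝ (gradient g) := hgradC.differentiable (by norm_num)
    set γ : ℝ → EuclideanSpace ℝ (Fin n) := fun t => astar + t • v with hγ
    have hγd : ∀ t : ℝ, HasDerivAt γ v t := by
      intro t
      have := ((hasDerivAt_id t).smul_const v).const_add astar
      simpa [hγ] using this
    have hγ0 : γ 0 = astar := by simp [hγ]
    have hγ1 : γ 1 = a := by simp [hγ, hv]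
    have hγmem : ∀ t ∈ Set.Icc (0:ℝ) 1, ‖γ t - astar‖ ≤ m' := by
      intro t ht
      have : γ t - astar = t • v := by simp [hγ]
      rw [this, norm_smul]
      calc ‖(t:ℝ)‖ * ‖v‖ ≤ 1 * m'' := by
            apply mul_le_mul _ hvm (norm_nonneg _) zero_le_one
            rw [Real.norm_eq_abs, abs_le]; constructor <;> linarith [ht.1, ht.2]
        _ ≤ m' := by linarith
    set L : ℝ := lamΔmin * ‖v‖ ^ 2 with hL
    -- first derivative of g ∘ γ
    have hD1 : ∀ t : ℝ, HasDerivAt (fun s => g (γ s)) ⟪gradient g (γ t), v⟫ t := by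
      intro t
      have hF : HasFDerivAt g ((InnerProductSpace.toDual ℝ _) (gradient g (γ t))) (γ t) :=
        (hg1 (γ t)).hasGradientAt.hasFDerivAt
      have := hF.comp_hasDerivAt t (hγd t)
      rw [InnerProductSpace.toDual_apply_apply] at this
      exact this
    -- derivative of t ↦ ⟪∇g(γ t), v⟫
    have hD2 : ∀ t : ℝ, HasDerivAt (fun s => ⟪gradient g (γ s), v⟫)
        ⟪fderiv ℝ (gradient g) (γ t) v, v⟫ t := by
      intro t
      have h1 : HasDerivAt (fun s => gradient g (γ s)) (fderiv ℝ (gradient g) (γ t) v) t :=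
        (hgradD (γ t)).hasFDerivAt.comp_hasDerivAt t (hγd t)
      have h2 := (h1.inner ℝ (hasDerivAt_const t v))
      simpa using h2
    -- Step A: monotone ψ on Icc 0 1
    have stepA : ∀ t ∈ Set.Icc (0:ℝ) 1, ⟪gradient g astar, v⟫ + L * t ≤ ⟪gradient g (γ t), v⟫ := by
      set ψ : ℝ → ℝ := fun t => ⟪gradient g (γ t), v⟫ - L * t with hψ
      have hψd : ∀ t : ℝ, HasDerivAt ψ (⟪fderiv ℝ (gradient g) (γ t) v, v⟫ - L) t := by
        intro t
        have hc' : HasDerivAt (fun s : ℝ => L * s) L t := by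
          simpa using (hasDerivAt_id t).const_mul L
        exact (hD2 t).sub hc'
      have hmono : MonotoneOn ψ (Set.Icc (0:ℝ) 1) := by
        apply monotoneOn_of_deriv_nonneg (convex_Icc 0 1)
        · exact Continuous.continuousOn
            (Differentiable.continuous (fun t => (hψd t).differentiableAt))
        · exact fun t _ => (hψd t).differentiableAt.differentiableWithinAt
        · intro t ht
          rw [(hψd t).deriv]
          rw [interior_Icc] at ht
          have := hHess (γ t) (hγmem t ⟨le_of_lt ht.1, le_of_lt ht.2⟩) v
          linarith
      intro t ht
      have := hmono (Set.left_mem_Icc.mpr zero_le_one) ht ht.1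
      simp only [hψ, hγ0] at this
      linarith [this]
    -- Step B: monotone Φ on Icc 0 1
    have stepB : g astar ≤ g a - ⟪gradient g astar, v⟫ - L / 2 := by
      set Φ : ℝ → ℝ := fun t => g (γ t) - ⟪gradient g astar, v⟫ * t - L / 2 * t ^ 2 with hΦ
      have hΦd : ∀ t : ℝ, HasDerivAt Φ
          (⟪gradient g (γ t), v⟫ - ⟪gradient g astar, v⟫ - L * t) t := by
        intro t
        have hc' : HasDerivAt (fun s : ℝ => ⟪gradient g astar, v⟫ * s)
            ⟪gradient g astar, v⟫ t := by
          simpa using (hasDerivAt_id t).const_mul (⟪gradient g astar, v⟫ : ℝ)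
        have h2 : HasDerivAt (fun s : ℝ => L / 2 * s ^ 2) (L * t) t := by
          have := (hasDerivAt_pow 2 t).const_mul (L / 2)
          simpa using this.congr_deriv (by ring)
        exact ((hD1 t).sub hc').sub h2
      have hmono : MonotoneOn Φ (Set.Icc (0:ℝ) 1) := by
        apply monotoneOn_of_deriv_nonneg (convex_Icc 0 1)
        · exact Continuous.continuousOn
            (Differentiable.continuous (fun t => (hΦd t).differentiableAt))
        · exact fun t _ => (hΦd t).differentiableAt.differentiableWithinAt
        · intro t ht
          rw [(hΦd t).deriv]
          rw [interior_Icc] at ht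
          have := stepA t ⟨le_of_lt ht.1, le_of_lt ht.2⟩
          linarith
      have := hmono (Set.left_mem_Icc.mpr zero_le_one)
        (Set.right_mem_Icc.mpr zero_le_one) zero_le_one
      simp only [hΦ, hγ0, hγ1] at this
      linarith [this]
    -- conclude
    have hkey : L / 2 ≤ ⟪gradient g astar, astar - a⟫ := by
      have h1 : ⟪gradient g astar, astar - a⟫ = -⟪gradient g astar, v⟫ := by
        rw [hv, ← inner_neg_right]; congr 1; abel
      rw [h1]
      have := hbdry
      linarith [stepB, ha]
    have hωθ : ⟪gradient g astar, astar - a⟫ = ω * ⟪θ, astar - a⟫ := by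
      rw [hgrad, inner_smul_left]; simp
    have hregret : L / (2 * ω) ≤ ⟪θ, astar⟫ - ⟪θ, a⟫ := by
      rw [← inner_sub_right]
      rw [hωθ] at hkey
      have h3 : L / 2 / ω ≤ ω * ⟪θ, astar - a⟫ / ω :=
        div_le_div_of_nonneg_right hkey hω.le
      have h4 : ω * ⟪θ, astar - a⟫ / ω = ⟪θ, astar - a⟫ :=
        mul_div_cancel_left₀ _ (ne_of_gt hω)
      rw [h4] at h3
      calc L / (2 * ω) = L / 2 / ω := by ring
        _ ≤ _ := h3
    -- ω * θmin ≤ gradmax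
    have hωbnd : ω * θmin ≤ gradmax := by
      have h1 : ‖gradient g astar‖ = ω * ‖θ‖ := by
        rw [hgrad, norm_smul, Real.norm_eq_abs, abs_of_pos hω]
      calc ω * θmin ≤ ω * ‖θ‖ := mul_le_mul_of_nonneg_left hθlb hω.le
        _ = ‖gradient g astar‖ := h1.symm
        _ ≤ gradmax := hgradbnd
    have hc3le : c₃ ≤ θmin * lamΔmin / (2 * gradmax) := hc₃ ▸ min_le_left _ _
    have h2 : θmin * lamΔmin / (2 * gradmax) ≤ lamΔmin / (2 * ω) := by
      rw [div_le_div_iff₀ (by positivity) (by positivity)]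
      linarith [mul_le_mul_of_nonneg_left hωbnd hlamΔmin.le]
    have hθa : c₃ * ‖astar - a‖ ^ 2 ≤ L / (2 * ω) := by
      rw [hnormrev]
      calc c₃ * ‖v‖ ^ 2 ≤ lamΔmin / (2 * ω) * ‖v‖ ^ 2 :=
            mul_le_mul_of_nonneg_right (hc3le.trans h2) (sq_nonneg _)
        _ = L / (2 * ω) := by rw [hL]; ring
    linarith [hθa, hregret]
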